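/- Let n ≥ 1 and p ≥ 1. Let f : ℝⁿ → ℝ be a C² convex function that is a submersion, i.e. ∇f(x) ≠ 0 for every x ∈ ℝⁿ. Then the vector field V(x) = ‖∇f(x)‖^{p-2} ∇f(x) has nonnegative divergence at every point: div V(x) = Σ_{i=1}^n ⟨(fderiv of V at x)(e_i), e_i⟩ ≥ 0 for every x, where (e_i) is the standard orthonormal basis. (Theorem 1.3 in the Euclidean case, in pointwise form.) -/

import Mathlib

open scoped RealInnerProductSpace
open MeasureTheory Filter Metric Real

section AuxLemmas

open Topology

/-- The derivative of a monotone function is nonnegative. -/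
lemma aux_mono_deriv_nonneg {h : ℝ → ℝ} {d t : ℝ}
    (hm : Monotone h) (hd : HasDerivAt h d t) : 0 ≤ d := by
  have h1 : Tendsto (slope h t) (𝓝[>] t) (𝓝 d) :=
    (hasDerivAt_iff_tendsto_slope.1 hd).mono_left
      (nhdsWithin_mono _ (fun y hy => ne_of_gt hy))
  refine ge_of_tendsto h1 ?_
  filter_upwards [self_mem_nhdsWithin] with y hy
  have hty : t < y := hy
  rw [slope_def_field]
  exact div_nonneg (by linarith [hm hty.le]) (by linarith)

/-- The gradient of a `C²` function is `C¹`. -/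
lemma aux_grad_contDiff {n : ℕ} {f : EuclideanSpace ℝ (Fin n) → ℝ} (hf : ContDiff ℝ 2 f) :
    ContDiff ℝ 1 (gradient f) := by
  have h1 : ContDiff ℝ 1 (fderiv ℝ f) := hf.fderiv_right (by norm_num)
  exact (InnerProductSpace.toDual ℝ (EuclideanSpace ℝ (Fin n))).symm.contDiff.comp h1

lemma aux_inner_grad {n : ℕ} (f : EuclideanSpace ℝ (Fin n) → ℝ)
    (y v : EuclideanSpace ℝ (Fin n)) :
    ⟪gradient f y, v⟫ = fderiv ℝ f y v :=
  InnerProductSpace.toDual_symm_apply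

/-- The Hessian of a `C²` convex function is positive semidefinite. -/
lemma aux_psd {n : ℕ} {f : EuclideanSpace ℝ (Fin n) → ℝ} (hf : ContDiff ℝ 2 f)
    (hconv : ConvexOn ℝ Set.univ f) (x v : EuclideanSpace ℝ (Fin n)) :
    0 ≤ ⟪fderiv ℝ (gradient f) x v, v⟫ := by
  have hgc : ContDiff ℝ 1 (gradient f) := aux_grad_contDiff hf
  have hgd : Differentiable ℝ (gradient f) := hgc.differentiable one_ne_zero
  have hfd : Differentiable ℝ f := hf.differentiable (by norm_num)
  set c : ℝ → EuclideanSpace ℝ (Fin n) := fun t => x + t • v with hc_def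
  have hc : ∀ t, HasDerivAt c v t := by
    intro t
    simpa [hc_def] using ((hasDerivAt_id t).smul_const v).const_add x
  set g1 : ℝ → ℝ := fun t => f (c t) with hg1_def
  have hconv1 : ConvexOn ℝ Set.univ g1 := by
    have := hconv.comp_affineMap (AffineMap.lineMap x (x + v))
    have he : (f ∘ (AffineMap.lineMap x (x + v)) : ℝ → ℝ) = g1 := by
      funext t
      simp [AffineMap.lineMap_apply, hg1_def, hc_def, add_comm]
    rw [he] at this
    simpa using this
  have hd1 : ∀ t, HasDerivAt g1 (⟪gradient f (c t), v⟫) t := by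
    intro t
    have := ((hfd (c t)).hasFDerivAt).comp_hasDerivAt t (hc t)
    rwa [aux_inner_grad]
  have hderiv : deriv g1 = fun t => ⟪gradient f (c t), v⟫ := by
    funext t; exact (hd1 t).deriv
  have hmono : Monotone fun t => ⟪gradient f (c t), v⟫ := by
    rw [← hderiv]
    have := hconv1.monotoneOn_deriv (fun y _ => ((hd1 y).differentiableAt))
    intro a b hab
    exact this (Set.mem_univ a) (Set.mem_univ b) hab
  have hgc0 : HasDerivAt (fun t => gradient f (c t)) (fderiv ℝ (gradient f) x v) 0 := by
    have h1 : HasFDerivAt (gradient f) (fderiv ℝ (gradient f) x) (c 0) := by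
      simpa [hc_def] using (hgd x).hasFDerivAt
    exact h1.comp_hasDerivAt 0 (hc 0)
  have hd2 : HasDerivAt (fun t => ⟪gradient f (c t), v⟫)
      (⟪fderiv ℝ (gradient f) x v, v⟫) 0 := by
    have := (hgc0.inner ℝ (hasDerivAt_const (0:ℝ) v))
    simpa using this
  exact aux_mono_deriv_nonneg hmono hd2

/-- The trace of an operator is the same when computed in any orthonormal basis. -/
lemma aux_trace_basis {n : ℕ} (H : EuclideanSpace ℝ (Fin n) →L[ℝ] EuclideanSpace ℝ (Fin n))
    (b : OrthonormalBasis (Fin n) ℝ (EuclideanSpace ℝ (Fin n))) :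
    ∑ i : Fin n, ⟪H (EuclideanSpace.single i 1), EuclideanSpace.single i 1⟫
      = ∑ j : Fin n, ⟪H (b j), b j⟫ := by
  set e := EuclideanSpace.basisFun (Fin n) ℝ with he
  have h1 : ∀ i : Fin n, ⟪H (e i), e i⟫ = ∑ j : Fin n, ⟪b j, e i⟫ * ⟪H (b j), e i⟫ := by
    intro i
    have hHe : H (e i) = ∑ j, ⟪b j, e i⟫ • H (b j) := by
      conv_lhs => rw [show (e i : EuclideanSpace ℝ (Fin n)) = ∑ j, ⟪b j, e i⟫ • b j from
        (b.sum_repr' (e i)).symm]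
      rw [map_sum]
      simp_rw [_root_.map_smul]
    rw [hHe, sum_inner]
    congr 1; funext j
    rw [real_inner_smul_left]
  calc ∑ i : Fin n, ⟪H (EuclideanSpace.single i 1), EuclideanSpace.single i 1⟫
      = ∑ i : Fin n, ⟪H (e i), e i⟫ := by simp [he]
    _ = ∑ i, ∑ j, ⟪b j, e i⟫ * ⟪H (b j), e i⟫ := by simp_rw [h1]
    _ = ∑ j, ∑ i, ⟪H (b j), e i⟫ * ⟪e i, b j⟫ := by
        rw [Finset.sum_comm]
        congr 1; funext j; congr 1; funext i
        rw [real_inner_comm (b j) (e i), mul_comm]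
    _ = ∑ j : Fin n, ⟪H (b j), b j⟫ := by
        congr 1; funext j; exact e.sum_inner_mul_inner _ _

/-- For a positive semidefinite operator, `⟪H w, w⟫ ≤ ‖w‖² ⋅ tr H`. -/
lemma aux_inner_le_trace {n : ℕ} (hn : 1 ≤ n)
    (H : EuclideanSpace ℝ (Fin n) →L[ℝ] EuclideanSpace ℝ (Fin n))
    (hpsd : ∀ v, 0 ≤ ⟪H v, v⟫) (w : EuclideanSpace ℝ (Fin n)) :
    ⟪H w, w⟫ ≤ ‖w‖ ^ 2 * ∑ i : Fin n,
      ⟪H (EuclideanSpace.single i 1), EuclideanSpace.single i 1⟫ := by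
  rcases eq_or_ne w 0 with rfl | hw
  · simp
  · set u : EuclideanSpace ℝ (Fin n) := ‖w‖⁻¹ • w with hu
    have hwn : ‖w‖ ≠ 0 := norm_ne_zero_iff.2 hw
    have hun : ‖u‖ = 1 := by
      rw [hu, norm_smul]
      simp [abs_of_nonneg (inv_nonneg.2 (norm_nonneg w)), inv_mul_cancel₀ hwn]
    have hcard : Module.finrank ℝ (EuclideanSpace ℝ (Fin n)) = Fintype.card (Fin n) := by simp
    have horth : Orthonormal ℝ (Set.restrict {(⟨0, hn⟩ : Fin n)} (fun _ : Fin n => u)) := by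
      constructor
      · intro i; exact hun
      · intro i j hij
        exact absurd (Subsingleton.elim i j) hij
    obtain ⟨b, hb⟩ := horth.exists_orthonormalBasis_extension_of_card_eq hcard
    have hb0 : b ⟨0, hn⟩ = u := hb _ rfl
    have htr := aux_trace_basis H b
    have h2 : ⟪H u, u⟫ ≤ ∑ j : Fin n, ⟪H (b j), b j⟫ := by
      have := Finset.single_le_sum (f := fun j => ⟪H (b j), b j⟫)
        (fun j _ => hpsd (b j)) (Finset.mem_univ (⟨0, hn⟩ : Fin n))
      simpa [hb0] using this
    have h3 : ⟪H w, w⟫ = ‖w‖ ^ 2 * ⟪H u, u⟫ := by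
      rw [hu, _root_.map_smul, real_inner_smul_left, real_inner_smul_right]
      field_simp
    rw [h3, htr]
    exact mul_le_mul_of_nonneg_left h2 (sq_nonneg _)

/-- `∑ᵢ ⟪H eᵢ, w⟫ ⟪w, eᵢ⟫ = ⟪H w, w⟫` for the standard orthonormal basis. -/
lemma aux_sum_single {n : ℕ} (H : EuclideanSpace ℝ (Fin n) →L[ℝ] EuclideanSpace ℝ (Fin n))
    (w : EuclideanSpace ℝ (Fin n)) :
    ∑ i : Fin n, ⟪H (EuclideanSpace.single i 1), w⟫ * ⟪w, EuclideanSpace.single i 1⟫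
      = ⟪H w, w⟫ := by
  set e := EuclideanSpace.basisFun (Fin n) ℝ with he
  have hHw : H w = ∑ i, ⟪e i, w⟫ • H (e i) := by
    conv_lhs => rw [← e.sum_repr' w]
    rw [map_sum]; simp_rw [_root_.map_smul]
  rw [hHw, sum_inner]
  congr 1; funext i
  rw [real_inner_smul_left]
  have h1 : (e i : EuclideanSpace ℝ (Fin n)) = EuclideanSpace.single i 1 := by
    simp [he]
  rw [h1, real_inner_comm w, mul_comm, real_inner_comm w]

end AuxLemmas

/-- Theorem 1.3 in the Euclidean case, pointwise form.
Let `p ≥ 1` and let `f : ℝⁿ → ℝ` be a `C²` convex function which is a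
submersion (`∇f(x) ≠ 0` everywhere).  Then the vector field
`V = ‖∇f‖^(p-2) ∇f` has nonnegative divergence at every point, where the
divergence is the trace of the Fréchet derivative of `V`. -/
theorem convex_C2_submersion_div_nonneg
    (n : ℕ) (hn : 1 ≤ n) (p : ℝ) (hp : 1 ≤ p)
    (f : EuclideanSpace ℝ (Fin n) → ℝ)
    (hf : ContDiff ℝ 2 f)
    (hconv : ConvexOn ℝ Set.univ f)
    (hsub : ∀ x, gradient f x ≠ 0)
    (V : EuclideanSpace ℝ (Fin n) → EuclideanSpace ℝ (Fin n))
    (hV : V = fun x => ‖gradient f x‖ ^ (p - 2) • gradient f x)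
    (x : EuclideanSpace ℝ (Fin n)) :
    0 ≤ ∑ i : Fin n,
        ⟪fderiv ℝ V x (EuclideanSpace.single i 1), EuclideanSpace.single i 1⟫ := by
  classical
  set g := gradient f with hg
  have hgc : ContDiff ℝ 1 g := aux_grad_contDiff hf
  have hgd : Differentiable ℝ g := hgc.differentiable one_ne_zero
  set H := fderiv ℝ g x with hH
  set w := g x with hwdef
  have hw0 : w ≠ 0 := hsub x
  have hs : (0:ℝ) < ⟪w, w⟫ := by
    rw [real_inner_self_eq_norm_sq]
    exact pow_pos (norm_pos_iff.2 hw0) 2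
  set s : ℝ := ⟪w, w⟫ with hsdef
  have hq : HasFDerivAt (fun y => ⟪g y, g y⟫)
      ((fderivInnerCLM ℝ (w, w)).comp (H.prod H)) x :=
    ((hgd x).hasFDerivAt).inner ℝ ((hgd x).hasFDerivAt)
  have hψ : HasDerivAt (fun t : ℝ => t ^ ((p-2)/2)) (((p-2)/2) * s ^ ((p-2)/2 - 1)) s :=
    Real.hasDerivAt_rpow_const (Or.inl (ne_of_gt hs))
  have hφ : HasFDerivAt (fun y => ⟪g y, g y⟫ ^ ((p-2)/2))
      ((((p-2)/2) * s ^ ((p-2)/2 - 1)) • ((fderivInnerCLM ℝ (w, w)).comp (H.prod H))) x :=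
    by have := hψ.comp_hasFDerivAt_of_eq x hq (by rw [hsdef, hwdef]); exact this
  have hVφ : V = fun y => (⟪g y, g y⟫ ^ ((p-2)/2)) • g y := by
    rw [hV]; funext y
    congr 1
    rw [real_inner_self_eq_norm_sq, ← Real.rpow_natCast (‖g y‖) 2,
      ← Real.rpow_mul (norm_nonneg _)]
    congr 1
    ring
  have hVd : HasFDerivAt V ((s ^ ((p-2)/2)) • H +
      ((((p-2)/2) * s ^ ((p-2)/2 - 1)) • ((fderivInnerCLM ℝ (w, w)).comp (H.prod H))).smulRight w)
      x := by
    rw [hVφ]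
    exact hφ.smul (hgd x).hasFDerivAt
  rw [hVd.fderiv]
  set c0 : ℝ := ((p-2)/2) * s ^ ((p-2)/2 - 1) with hc0
  have hsum : ∀ i : Fin n,
      ⟪((s ^ ((p-2)/2)) • H +
        (c0 • ((fderivInnerCLM ℝ (w, w)).comp (H.prod H))).smulRight w)
          (EuclideanSpace.single i 1), EuclideanSpace.single i 1⟫
      = s ^ ((p-2)/2) * ⟪H (EuclideanSpace.single i 1), EuclideanSpace.single i 1⟫
        + (2 * c0) * (⟪H (EuclideanSpace.single i 1), w⟫ * ⟪w, EuclideanSpace.single i 1⟫) := by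
    intro i
    set ei := EuclideanSpace.single i (1:ℝ)
    rw [ContinuousLinearMap.add_apply, inner_add_left, ContinuousLinearMap.smul_apply,
      real_inner_smul_left, ContinuousLinearMap.smulRight_apply, ContinuousLinearMap.smul_apply,
      ContinuousLinearMap.comp_apply]
    have : (fderivInnerCLM ℝ (w, w)) ((H.prod H) ei) = 2 * ⟪H ei, w⟫ := by
      rw [ContinuousLinearMap.prod_apply]
      rw [fderivInnerCLM_apply]
      rw [real_inner_comm w (H ei)]
      ring
    rw [smul_eq_mul, this, real_inner_smul_left]
    ring
  set T := ∑ i : Fin n, ⟪H (EuclideanSpace.single i 1), EuclideanSpace.single i 1⟫ with hT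
  have hsum2 : ∑ i : Fin n,
      ⟪((s ^ ((p-2)/2)) • H +
        (c0 • ((fderivInnerCLM ℝ (w, w)).comp (H.prod H))).smulRight w)
          (EuclideanSpace.single i 1), EuclideanSpace.single i 1⟫
      = s ^ ((p-2)/2) * T + (2*c0) * ⟪H w, w⟫ := by
    simp_rw [hsum]
    rw [Finset.sum_add_distrib, ← Finset.mul_sum, ← Finset.mul_sum, aux_sum_single]
  rw [hsum2]
  have hpsd : ∀ v, 0 ≤ ⟪H v, v⟫ := fun v => aux_psd hf hconv x v
  have hQ0 : 0 ≤ ⟪H w, w⟫ := hpsd w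
  have hQT : ⟪H w, w⟫ ≤ ‖w‖ ^ 2 * T := aux_inner_le_trace hn H hpsd w
  have hwT : ‖w‖ ^ 2 = s := (real_inner_self_eq_norm_sq w).symm
  rw [hwT] at hQT
  have hA : 0 < s ^ ((p-2)/2 - 1) := Real.rpow_pos_of_pos hs _
  have hsplit : s ^ ((p-2)/2) = s ^ ((p-2)/2 - 1) * s := by
    rw [← Real.rpow_add_one (ne_of_gt hs) ((p-2)/2 - 1)]
    congr 1
    ring
  rw [hsplit, hc0]
  nlinarith [mul_nonneg hA.le (sub_nonneg.2 hQT),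
    mul_nonneg (mul_nonneg hA.le (sub_nonneg.2 hp)) hQ0]
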